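/- There exist a finite Borel measure μ on ℝ², a subset E ⊆ supp(μ), points e, f ∈ E, and functions I¹ : E → ℝ and I^∞ : E → ℝ such that I¹ is an Onsager–Machlup functional for μ on E with respect to the metric induced by the 1-norm ‖·‖₁ on ℝ², I^∞ is an Onsager–Machlup functional for μ on E with respect to the metric induced by the supremum norm ‖·‖_∞ on ℝ², and I¹(f) − I¹(e) = log √2 while I^∞(f) − I^∞(e) = −log √2; in particular I¹ and I^∞ do not differ by an additive constant, even though ‖·‖₁ and ‖·‖_∞ are Lipschitz-equivalent norms. -/

import Mathlib

open MeasureTheory Metric Filter Set Topology ENNReal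

noncomputable section

/-- The topological support of a Borel measure on a metric space: the set of points all of
whose open balls have positive measure. -/
def measureSupport {X : Type*} [PseudoMetricSpace X] [MeasurableSpace X]
    (μ : Measure X) : Set X :=
  {x | ∀ r > 0, 0 < μ (Metric.ball x r)}

/-- `I` is an Onsager--Machlup functional for `μ` on `E`: for all `x₁ x₂ ∈ E`, the ratio of
small-ball probabilities tends to `exp (I x₂ - I x₁)` as the radius tends to `0⁺`. -/
def IsOMFunctional {X : Type*} [PseudoMetricSpace X] [MeasurableSpace X]
    (μ : Measure X) (E : Set X) (I : X → ℝ) : Prop :=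
  ∀ x₁ ∈ E, ∀ x₂ ∈ E,
    Filter.Tendsto (fun r : ℝ => μ (Metric.ball x₁ r) / μ (Metric.ball x₂ r))
      (𝓝[>] 0) (𝓝 (ENNReal.ofReal (Real.exp (I x₂ - I x₁))))

/-- Property `M(μ, E)`: there is `x⋆ ∈ E` such that for every `x ∉ E` the small-ball
probability ratio `μ(B(x,r)) / μ(B(x⋆,r))` tends to `0` as `r → 0⁺`. -/
def PropertyM {X : Type*} [PseudoMetricSpace X] [MeasurableSpace X]
    (μ : Measure X) (E : Set X) : Prop :=
  ∃ xs ∈ E, ∀ x ∉ E,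
    Filter.Tendsto (fun r : ℝ => μ (Metric.ball x r) / μ (Metric.ball xs r)) (𝓝[>] 0) (𝓝 0)

/-- Ratio of two eventually-linear ball mass functions tends to the ratio of slopes. -/
lemma aux_ratio_tendsto (a b : ℝ) (hb : 0 < b)
    (F G : ℝ → ℝ≥0∞)
    (hF : ∀ r ∈ Set.Ioo (0:ℝ) (1/2), F r = ENNReal.ofReal (a * r))
    (hG : ∀ r ∈ Set.Ioo (0:ℝ) (1/2), G r = ENNReal.ofReal (b * r)) :
    Filter.Tendsto (fun r => F r / G r) (𝓝[>] 0) (𝓝 (ENNReal.ofReal (a / b))) := by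
  have hmem : Set.Ioo (0:ℝ) (1/2) ∈ 𝓝[>] (0:ℝ) :=
    Ioo_mem_nhdsGT_of_mem (by norm_num : (0:ℝ) ∈ Set.Ico 0 (1/2))
  refine Filter.Tendsto.congr' ?_ tendsto_const_nhds
  filter_upwards [hmem] with r hr
  rw [hF r hr, hG r hr, ← ENNReal.ofReal_div_of_pos (mul_pos hb hr.1),
    mul_div_mul_right _ _ (ne_of_gt hr.1)]

/-- Restricted Lebesgue mass of a small interval around `1/2`. -/
lemma aux_seg (s : ℝ) (hs' : s ≤ 1/2) :
    (volume.restrict (Set.Icc (0:ℝ) 1)) {t : ℝ | |t - 1/2| < s} = ENNReal.ofReal (2*s) := by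
  rw [Measure.restrict_apply' measurableSet_Icc]
  have h1 : {t : ℝ | |t - 1/2| < s} = Set.Ioo (1/2 - s) (1/2 + s) := by
    ext t
    rw [Set.mem_setOf_eq, abs_sub_lt_iff, Set.mem_Ioo]
    constructor <;> rintro ⟨h1, h2⟩ <;> constructor <;> linarith
  rw [h1, Set.inter_eq_left.mpr (Set.Ioo_subset_Icc_self.trans
    (Set.Icc_subset_Icc (by linarith) (by linarith))), Real.volume_Ioo]
  congr 1; ring

/-- On `ℝ × ℝ` the product metric is induced by the supremum norm, so `Metric.ball`
is the `∞`-norm ball; the `1`-norm ball is written out explicitly. -/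
theorem exists_measure_with_distinct_OM_functionals_for_equivalent_norms :
    ∃ (μ : Measure (ℝ × ℝ)) (E : Set (ℝ × ℝ)) (e f : ℝ × ℝ) (I1 Iinf : ℝ × ℝ → ℝ),
      IsFiniteMeasure μ ∧ E ⊆ measureSupport μ ∧ e ∈ E ∧ f ∈ E ∧
      (∀ x₁ ∈ E, ∀ x₂ ∈ E,
        Filter.Tendsto (fun r : ℝ =>
            μ {y : ℝ × ℝ | |y.1 - x₁.1| + |y.2 - x₁.2| < r}
              / μ {y : ℝ × ℝ | |y.1 - x₂.1| + |y.2 - x₂.2| < r})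
          (𝓝[>] 0) (𝓝 (ENNReal.ofReal (Real.exp (I1 x₂ - I1 x₁))))) ∧
      (∀ x₁ ∈ E, ∀ x₂ ∈ E,
        Filter.Tendsto (fun r : ℝ => μ (Metric.ball x₁ r) / μ (Metric.ball x₂ r))
          (𝓝[>] 0) (𝓝 (ENNReal.ofReal (Real.exp (Iinf x₂ - Iinf x₁))))) ∧
      I1 f - I1 e = Real.log (Real.sqrt 2) ∧
      Iinf f - Iinf e = - Real.log (Real.sqrt 2) ∧
      ¬ ∃ c : ℝ, ∀ x ∈ E, Iinf x = I1 x + c := by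
  set ν : Measure ℝ := volume.restrict (Set.Icc (0:ℝ) 1) with hν
  set g : ℝ → ℝ × ℝ := fun t => (t, 0) with hgdef
  set h : ℝ → ℝ × ℝ := fun t => (t, t + 2) with hhdef
  have hg : Measurable g := by fun_prop
  have hh : Measurable h := by fun_prop
  set μ : Measure (ℝ × ℝ) := ν.map g + ENNReal.ofReal (Real.sqrt 2) • ν.map h with hμ
  have hμS : ∀ S : Set (ℝ × ℝ), MeasurableSet S →
      μ S = ν (g ⁻¹' S) + ENNReal.ofReal (Real.sqrt 2) * ν (h ⁻¹' S) := by
    intro S hS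
    rw [hμ, Measure.add_apply, Measure.smul_apply, Measure.map_apply hg hS,
      Measure.map_apply hh hS, smul_eq_mul]
  have hmeas1 : ∀ (a b r : ℝ), MeasurableSet {y : ℝ × ℝ | |y.1 - a| + |y.2 - b| < r} := by
    intro a b r
    exact measurableSet_lt (by fun_prop) measurable_const
  have hs2 : (0:ℝ) < Real.sqrt 2 := Real.sqrt_pos.mpr (by norm_num)
  have hss : Real.sqrt 2 * Real.sqrt 2 = 2 := Real.mul_self_sqrt (by norm_num)
  have h12 : (1:ℝ) < Real.sqrt 2 := by
    nlinarith
  -- the four small-ball mass computations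
  have hB1e : ∀ r ∈ Set.Ioo (0:ℝ) (1/2),
      μ {y : ℝ × ℝ | |y.1 - (1/2:ℝ)| + |y.2 - (0:ℝ)| < r} = ENNReal.ofReal (2*r) := by
    intro r hr
    rw [hμS _ (hmeas1 _ _ _)]
    have h1 : g ⁻¹' {y : ℝ × ℝ | |y.1 - (1/2:ℝ)| + |y.2 - (0:ℝ)| < r}
        = {t : ℝ | |t - 1/2| < r} := by
      ext t; simp [hgdef]
    have h2 : h ⁻¹' {y : ℝ × ℝ | |y.1 - (1/2:ℝ)| + |y.2 - (0:ℝ)| < r} = ∅ := by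
      ext t
      simp only [hhdef, Set.mem_preimage, Set.mem_setOf_eq, Set.mem_empty_iff_false,
        iff_false, not_lt]
      have h3 := neg_abs_le (t - 1/2)
      have h4 := le_abs_self (t + 2 - 0)
      linarith [hr.2]
    rw [h1, h2, aux_seg r (le_of_lt hr.2), measure_empty, mul_zero, add_zero]
  have hB1f : ∀ r ∈ Set.Ioo (0:ℝ) (1/2),
      μ {y : ℝ × ℝ | |y.1 - (1/2:ℝ)| + |y.2 - (5/2:ℝ)| < r}
        = ENNReal.ofReal (Real.sqrt 2 * r) := by
    intro r hr
    rw [hμS _ (hmeas1 _ _ _)]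
    have h1 : g ⁻¹' {y : ℝ × ℝ | |y.1 - (1/2:ℝ)| + |y.2 - (5/2:ℝ)| < r} = ∅ := by
      ext t
      simp only [hgdef, Set.mem_preimage, Set.mem_setOf_eq, Set.mem_empty_iff_false,
        iff_false, not_lt]
      have h3 := abs_nonneg (t - 1/2)
      have h4 := le_abs_self ((5:ℝ)/2 - 0)
      have h5 : |(0:ℝ) - 5/2| = 5/2 := by rw [abs_sub_comm]; norm_num
      linarith [hr.2]
    have h2 : h ⁻¹' {y : ℝ × ℝ | |y.1 - (1/2:ℝ)| + |y.2 - (5/2:ℝ)| < r}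
        = {t : ℝ | |t - 1/2| < r/2} := by
      ext t
      simp only [hhdef, Set.mem_preimage, Set.mem_setOf_eq]
      rw [show t + 2 - 5/2 = t - 1/2 by ring]
      constructor <;> intro hx <;> linarith
    rw [h1, h2, aux_seg (r/2) (by linarith [hr.2]), measure_empty, zero_add,
      ← ENNReal.ofReal_mul (le_of_lt hs2)]
    congr 1; ring
  have hBinfe : ∀ r ∈ Set.Ioo (0:ℝ) (1/2),
      μ (Metric.ball (((1:ℝ)/2, (0:ℝ)) : ℝ × ℝ) r) = ENNReal.ofReal (2*r) := by
    intro r hr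
    rw [hμS _ measurableSet_ball]
    have h1 : g ⁻¹' Metric.ball (((1:ℝ)/2, (0:ℝ)) : ℝ × ℝ) r = {t : ℝ | |t - 1/2| < r} := by
      ext t
      simp only [hgdef, Set.mem_preimage, Metric.mem_ball, Prod.dist_eq, Real.dist_eq,
        max_lt_iff, Set.mem_setOf_eq, sub_zero, abs_zero]
      exact ⟨fun hx => hx.1, fun hx => ⟨hx, hr.1⟩⟩
    have h2 : h ⁻¹' Metric.ball (((1:ℝ)/2, (0:ℝ)) : ℝ × ℝ) r = ∅ := by
      ext t
      simp only [hhdef, Set.mem_preimage, Metric.mem_ball, Prod.dist_eq, Real.dist_eq,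
        max_lt_iff, Set.mem_empty_iff_false, iff_false, not_and, not_lt]
      intro h3
      have h4 := le_abs_self (t + 2 - 0)
      have h5 := neg_abs_le (t - 1/2)
      linarith [hr.2]
    rw [h1, h2, aux_seg r (le_of_lt hr.2), measure_empty, mul_zero, add_zero]
  have hBinff : ∀ r ∈ Set.Ioo (0:ℝ) (1/2),
      μ (Metric.ball (((1:ℝ)/2, (5:ℝ)/2) : ℝ × ℝ) r)
        = ENNReal.ofReal ((2 * Real.sqrt 2) * r) := by
    intro r hr
    rw [hμS _ measurableSet_ball]
    have h1 : g ⁻¹' Metric.ball (((1:ℝ)/2, (5:ℝ)/2) : ℝ × ℝ) r = ∅ := by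
      ext t
      simp only [hgdef, Set.mem_preimage, Metric.mem_ball, Prod.dist_eq, Real.dist_eq,
        max_lt_iff, Set.mem_empty_iff_false, iff_false, not_and, not_lt]
      intro _
      have h5 : |(0:ℝ) - 5/2| = 5/2 := by rw [abs_sub_comm]; norm_num
      linarith [hr.2]
    have h2 : h ⁻¹' Metric.ball (((1:ℝ)/2, (5:ℝ)/2) : ℝ × ℝ) r = {t : ℝ | |t - 1/2| < r} := by
      ext t
      simp only [hhdef, Set.mem_preimage, Metric.mem_ball, Prod.dist_eq, Real.dist_eq,
        max_lt_iff, Set.mem_setOf_eq]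
      rw [show t + 2 - 5/2 = t - 1/2 by ring]
      exact and_self_iff
    rw [h1, h2, aux_seg r (le_of_lt hr.2), measure_empty, zero_add,
      ← ENNReal.ofReal_mul (le_of_lt hs2)]
    congr 1; ring
  refine ⟨μ, {((1:ℝ)/2, (0:ℝ)), ((1:ℝ)/2, (5:ℝ)/2)}, ((1:ℝ)/2, (0:ℝ)), ((1:ℝ)/2, (5:ℝ)/2),
    (fun x => if x.2 = 0 then 0 else Real.log (Real.sqrt 2)),
    (fun x => if x.2 = 0 then 0 else -Real.log (Real.sqrt 2)),
    ?_, ?_, by simp, by simp, ?_, ?_, ?_, ?_, ?_⟩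
  · -- finite measure
    constructor
    rw [hμS Set.univ MeasurableSet.univ, Set.preimage_univ, Set.preimage_univ, hν,
      Measure.restrict_apply' measurableSet_Icc, Set.univ_inter, Real.volume_Icc]
    exact ENNReal.add_lt_top.mpr ⟨ENNReal.ofReal_lt_top,
      ENNReal.mul_lt_top ENNReal.ofReal_lt_top ENNReal.ofReal_lt_top⟩
  · -- support
    intro x hx
    simp only [Set.mem_insert_iff, Set.mem_singleton_iff] at hx
    intro r hr
    have hr' : min r (1/4) ∈ Set.Ioo (0:ℝ) (1/2) :=
      ⟨lt_min hr (by norm_num), lt_of_le_of_lt (min_le_right _ _) (by norm_num)⟩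
    have hmono : μ (Metric.ball x (min r (1/4))) ≤ μ (Metric.ball x r) :=
      measure_mono (Metric.ball_subset_ball (min_le_left _ _))
    rcases hx with rfl | rfl
    · refine lt_of_lt_of_le ?_ hmono
      rw [hBinfe _ hr']
      exact ENNReal.ofReal_pos.mpr (by positivity)
    · refine lt_of_lt_of_le ?_ hmono
      rw [hBinff _ hr']
      exact ENNReal.ofReal_pos.mpr (by positivity)
  · -- OM functional for the 1-norm
    intro x₁ hx₁ x₂ hx₂
    simp only [Set.mem_insert_iff, Set.mem_singleton_iff] at hx₁ hx₂
    rcases hx₁ with rfl | rfl <;> rcases hx₂ with rfl | rfl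
    · convert aux_ratio_tendsto 2 2 (by norm_num) _ _ hB1e hB1e using 2
      norm_num
    · convert aux_ratio_tendsto 2 (Real.sqrt 2) hs2 _ _ hB1e hB1f using 2
      norm_num [Real.exp_log hs2]
    · convert aux_ratio_tendsto (Real.sqrt 2) 2 (by norm_num) _ _ hB1f hB1e using 2
      norm_num [Real.exp_neg, Real.exp_log hs2]
      rw [← ENNReal.ofReal_inv_of_pos hs2]
      congr 1
      field_simp
      rw [sq, hss]
    · convert aux_ratio_tendsto (Real.sqrt 2) (Real.sqrt 2) hs2 _ _ hB1f hB1f using 2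
      rw [div_self (ne_of_gt hs2)]
      norm_num
  · -- OM functional for the sup-norm
    intro x₁ hx₁ x₂ hx₂
    simp only [Set.mem_insert_iff, Set.mem_singleton_iff] at hx₁ hx₂
    rcases hx₁ with rfl | rfl <;> rcases hx₂ with rfl | rfl
    · convert aux_ratio_tendsto 2 2 (by norm_num) _ _ hBinfe hBinfe using 2
      norm_num
    · convert aux_ratio_tendsto 2 (2 * Real.sqrt 2) (by positivity) _ _ hBinfe hBinff using 2
      norm_num [Real.exp_neg, Real.exp_log hs2]
      rw [← ENNReal.ofReal_inv_of_pos hs2]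
      congr 1
      field_simp
    · convert aux_ratio_tendsto (2 * Real.sqrt 2) 2 (by norm_num) _ _ hBinff hBinfe using 2
      norm_num [Real.exp_log hs2]
    · convert aux_ratio_tendsto (2 * Real.sqrt 2) (2 * Real.sqrt 2) (by positivity)
        _ _ hBinff hBinff using 2
      rw [div_self (by positivity)]
      norm_num
  · norm_num
  · norm_num
  · rintro ⟨c, hc⟩
    have h1 := hc ((1:ℝ)/2, (0:ℝ)) (by simp)
    have h2 := hc ((1:ℝ)/2, (5:ℝ)/2) (by simp)
    norm_num at h1 h2
    have := Real.log_pos h12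
    linarith
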